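/- If the log-moment condition ∫_{(1,∞)} ln(u) μ(du) < ∞ holds, then ∫_0^1 (1/z) exp{ −∫_z^1 ( ∫_{(0,∞)} (1 − e^{−us}) μ(ds) ) / ω(u) du } dz = ∞. -/

import Mathlib

open MeasureTheory Set

/-- If the log-moment condition ∫_{(1,∞)} ln(u) μ(du) < ∞ holds, then
∫_0^1 (1/z) exp{−∫_z^1 (∫ (1−e^{−us}) μ(ds))/ω(u) du} dz = ∞. -/
theorem stmt_10
    (μ : Measure ℝ) (c σ : ℝ)
    (hμ0 : μ (Iic 0) = 0)
    (hμint : ∫⁻ u in Ioi (0:ℝ), ENNReal.ofReal (min 1 u) ∂μ < ⊤)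
    (hc : 0 < c) (hσ : 0 ≤ σ)
    (hlog : ∫⁻ u in Ioi (1:ℝ), ENNReal.ofReal (Real.log u) ∂μ < ⊤)
    (ω : ℝ → ℝ)
    (hω : ∀ z, ω z = c * z + σ ^ 2 * z ^ 2 / 2) :
    (∫⁻ z in Ioc (0:ℝ) 1,
        ENNReal.ofReal ((1 / z) * Real.exp
          (-(∫ u in z..(1:ℝ),
              (∫ s in Ioi (0:ℝ), (1 - Real.exp (-(u * s))) ∂μ) / ω u)))) = ⊤ := by
  -- the function ω
  have hωm : Measurable ω := by
    have h : ω = fun z => c * z + σ ^ 2 * z ^ 2 / 2 := funext hω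
    rw [h]; fun_prop
  have hωpos : ∀ u : ℝ, 0 < u → 0 < ω u := by
    intro u hu; rw [hω]; positivity
  have hωge : ∀ u : ℝ, 0 < u → c * u ≤ ω u := by
    intro u hu; rw [hω]; nlinarith [sq_nonneg σ, sq_nonneg u]
  -- elementary exponential bounds
  have hexp1 : ∀ x : ℝ, 0 ≤ x → 1 - Real.exp (-x) ≤ x := by
    intro x hx; have := Real.add_one_le_exp (-x); linarith
  have hexp0 : ∀ x : ℝ, 0 ≤ x → 0 ≤ 1 - Real.exp (-x) := by
    intro x hx
    have h1 : Real.exp (-x) ≤ Real.exp 0 := Real.exp_le_exp.mpr (neg_nonpos.mpr hx)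
    rw [Real.exp_zero] at h1; linarith
  -- f u = ∫ (1 - e^{-us}) dμ(s)
  set f : ℝ → ℝ := fun u => ∫ s in Ioi (0:ℝ), (1 - Real.exp (-(u * s))) ∂μ with hf_def
  show (∫⁻ z in Ioc (0:ℝ) 1,
      ENNReal.ofReal ((1 / z) * Real.exp (-(∫ u in z..(1:ℝ), f u / ω u)))) = ⊤
  -- integrability of min 1 s
  have h_int_min : IntegrableOn (fun s : ℝ => min 1 s) (Ioi 0) μ := by
    refine ⟨(measurable_const.min measurable_id).aestronglyMeasurable, ?_⟩
    rw [hasFiniteIntegral_iff_ofReal ?_]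
    · exact hμint
    · filter_upwards [ae_restrict_mem measurableSet_Ioi] with s hs
      exact le_min zero_le_one hs.le
  -- integrability of the kernel
  have hker_int : ∀ u : ℝ, u ∈ Icc (0:ℝ) 1 →
      IntegrableOn (fun s => 1 - Real.exp (-(u * s))) (Ioi 0) μ := by
    intro u hu
    refine Integrable.mono h_int_min
      ((by fun_prop : Measurable fun s : ℝ => 1 - Real.exp (-(u * s))).aestronglyMeasurable) ?_
    filter_upwards [ae_restrict_mem measurableSet_Ioi] with s hs
    have h1 : 0 ≤ u * s := mul_nonneg hu.1 hs.le
    have h2 : 1 - Real.exp (-(u * s)) ≤ min 1 s := by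
      refine le_min ?_ ?_
      · have := Real.exp_nonneg (-(u * s)); linarith
      · calc 1 - Real.exp (-(u * s)) ≤ u * s := hexp1 _ h1
          _ ≤ 1 * s := by nlinarith [hu.2, (show (0:ℝ) < s from hs).le]
          _ = s := one_mul s
    rw [Real.norm_eq_abs, Real.norm_eq_abs, abs_of_nonneg (hexp0 _ h1),
      abs_of_nonneg (le_min zero_le_one hs.le)]
    exact h2
  have hf_nonneg : ∀ u : ℝ, 0 ≤ u → 0 ≤ f u := by
    intro u hu
    exact setIntegral_nonneg measurableSet_Ioi fun s hs => hexp0 _ (mul_nonneg hu (le_of_lt hs))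
  have hf_mono : MonotoneOn f (Icc (0:ℝ) 1) := by
    intro u hu v hv huv
    refine setIntegral_mono_on (hker_int u hu) (hker_int v hv) measurableSet_Ioi ?_
    intro s hs
    have hs0 : (0:ℝ) < s := hs
    have h1 : -(v * s) ≤ -(u * s) := by nlinarith
    have := Real.exp_le_exp.mpr h1
    linarith
  have hf_meas : AEMeasurable f (volume.restrict (Ioc (0:ℝ) 1)) :=
    (aemeasurable_restrict_of_monotoneOn measurableSet_Icc hf_mono).mono_measure
      (Measure.restrict_mono Ioc_subset_Icc_self le_rfl)
  have hF_meas : AEMeasurable (fun u => f u / ω u) (volume.restrict (Ioc (0:ℝ) 1)) :=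
    hf_meas.div hωm.aemeasurable
  -- A = ∫_{(0,1]} s dμ
  set A : ℝ := ∫ s in Ioc (0:ℝ) 1, s ∂μ with hA_def
  have hA_int : IntegrableOn (fun s : ℝ => s) (Ioc (0:ℝ) 1) μ := by
    refine Integrable.mono (h_int_min.mono_set Ioc_subset_Ioi_self)
      measurable_id.aestronglyMeasurable ?_
    filter_upwards [ae_restrict_mem measurableSet_Ioc] with s hs
    rw [Real.norm_eq_abs, Real.norm_eq_abs, abs_of_nonneg hs.1.le,
      abs_of_nonneg (le_min zero_le_one hs.1.le)]
    exact le_of_eq (min_eq_right hs.2).symm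
  -- μ((1,∞)) < ∞
  have hμ1 : μ (Ioi (1:ℝ)) < ⊤ := by
    have h2 : μ (Ioi (1:ℝ)) = ∫⁻ s in Ioi (1:ℝ), ENNReal.ofReal (min 1 s) ∂μ := by
      rw [← setLIntegral_one]
      refine lintegral_congr_ae ?_
      filter_upwards [ae_restrict_mem measurableSet_Ioi] with s hs
      rw [min_eq_left hs.le, ENNReal.ofReal_one]
    rw [h2]
    exact (lintegral_mono_set (Ioi_subset_Ioi zero_le_one)).trans_lt hμint
  haveI : IsFiniteMeasure (μ.restrict (Ioi (1:ℝ))) :=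
    ⟨by rwa [Measure.restrict_apply_univ]⟩
  -- g u = ∫_{(1,∞)} min(1, us) dμ(s)
  set g : ℝ → ℝ := fun u => ∫ s in Ioi (1:ℝ), min 1 (u * s) ∂μ with hg_def
  have hg_int : ∀ u : ℝ, 0 ≤ u → IntegrableOn (fun s => min 1 (u * s)) (Ioi 1) μ := by
    intro u hu
    refine Integrable.mono (integrable_const (1:ℝ))
      ((by fun_prop : Measurable fun s : ℝ => min 1 (u * s)).aestronglyMeasurable) ?_
    filter_upwards [ae_restrict_mem measurableSet_Ioi] with s hs
    have hs0 : (0:ℝ) ≤ s := by have : (1:ℝ) < s := hs; linarith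
    rw [Real.norm_eq_abs, abs_of_nonneg (le_min zero_le_one (mul_nonneg hu hs0))]
    simpa using min_le_left 1 (u * s)
  -- f u ≤ u * A + g u
  have hfg : ∀ u : ℝ, u ∈ Ioc (0:ℝ) 1 → f u ≤ u * A + g u := by
    intro u hu
    have huI : u ∈ Icc (0:ℝ) 1 := ⟨hu.1.le, hu.2⟩
    have hi := hker_int u huI
    have hiA : IntegrableOn (fun s => 1 - Real.exp (-(u * s))) (Ioc 0 1) μ :=
      hi.mono_set Ioc_subset_Ioi_self
    have hiB : IntegrableOn (fun s => 1 - Real.exp (-(u * s))) (Ioi 1) μ :=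
      hi.mono_set (Ioi_subset_Ioi zero_le_one)
    have h1 : f u = (∫ s in Ioc (0:ℝ) 1, (1 - Real.exp (-(u * s))) ∂μ)
        + ∫ s in Ioi (1:ℝ), (1 - Real.exp (-(u * s))) ∂μ := by
      rw [hf_def]
      rw [show Ioi (0:ℝ) = Ioc 0 1 ∪ Ioi 1 from (Ioc_union_Ioi_eq_Ioi zero_le_one).symm]
      exact setIntegral_union (Ioc_disjoint_Ioi le_rfl) measurableSet_Ioi hiA hiB
    have h2 : ∫ s in Ioc (0:ℝ) 1, (1 - Real.exp (-(u * s))) ∂μ ≤ u * A := by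
      calc ∫ s in Ioc (0:ℝ) 1, (1 - Real.exp (-(u * s))) ∂μ
          ≤ ∫ s in Ioc (0:ℝ) 1, u * s ∂μ := by
            refine setIntegral_mono_on hiA (hA_int.const_mul u) measurableSet_Ioc ?_
            intro s hs
            exact hexp1 _ (mul_nonneg hu.1.le hs.1.le)
        _ = u * A := by rw [hA_def, integral_const_mul]
    have h3 : ∫ s in Ioi (1:ℝ), (1 - Real.exp (-(u * s))) ∂μ ≤ g u := by
      refine setIntegral_mono_on hiB (hg_int u hu.1.le) measurableSet_Ioi ?_
      intro s hs
      have hs0 : (0:ℝ) ≤ s := by have : (1:ℝ) < s := hs; linarith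
      refine le_min ?_ (hexp1 _ (mul_nonneg hu.1.le hs0))
      have := Real.exp_nonneg (-(u * s)); linarith
    linarith
  -- lintegral version of g
  set G : ℝ → ENNReal := fun u => ∫⁻ s in Ioi (1:ℝ), ENNReal.ofReal (min 1 (u * s)) ∂μ with hG_def
  have hgG : ∀ u : ℝ, 0 ≤ u → ENNReal.ofReal (g u) = G u := by
    intro u hu
    refine ofReal_integral_eq_lintegral_ofReal (hg_int u hu) ?_
    filter_upwards [ae_restrict_mem measurableSet_Ioi] with s hs
    have hs0 : (0:ℝ) ≤ s := by have : (1:ℝ) < s := hs; linarith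
    exact le_min zero_le_one (mul_nonneg hu hs0)
  -- T = ∫_0^1 G u / u du
  set T : ENNReal := ∫⁻ u in Ioc (0:ℝ) 1, G u / ENNReal.ofReal u with hT_def
  have hswap : T = ∫⁻ s in Ioi (1:ℝ),
      ∫⁻ u in Ioc (0:ℝ) 1, ENNReal.ofReal (min 1 (u * s)) / ENNReal.ofReal u ∂volume ∂μ := by
    rw [hT_def]
    have h1 : ∀ᵐ u ∂(volume.restrict (Ioc (0:ℝ) 1)), G u / ENNReal.ofReal u
        = ∫⁻ s in Ioi (1:ℝ), ENNReal.ofReal (min 1 (u * s)) / ENNReal.ofReal u ∂μ := by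
      filter_upwards [ae_restrict_mem measurableSet_Ioc] with u hu
      rw [hG_def]
      simp only [div_eq_mul_inv]
      rw [lintegral_mul_const' _ _ (ENNReal.inv_ne_top.mpr (ENNReal.ofReal_pos.mpr hu.1).ne')]
    rw [lintegral_congr_ae h1]
    exact lintegral_lintegral_swap
      ((by fun_prop :
        Measurable fun p : ℝ × ℝ =>
          ENNReal.ofReal (min 1 (p.1 * p.2)) / ENNReal.ofReal p.1).aemeasurable)
  have hinner : ∀ s : ℝ, s ∈ Ioi (1:ℝ) →
      (∫⁻ u in Ioc (0:ℝ) 1, ENNReal.ofReal (min 1 (u * s)) / ENNReal.ofReal u)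
        ≤ 1 + ENNReal.ofReal (Real.log s) := by
    intro s hs
    have hs1 : (1:ℝ) < s := hs
    have hspos : (0:ℝ) < s := lt_trans one_pos hs1
    have h1s : (0:ℝ) < 1 / s := by positivity
    have h1s1 : (1:ℝ) / s ≤ 1 := by rw [div_le_one hspos]; exact hs1.le
    rw [← Ioc_union_Ioc_eq_Ioc h1s.le h1s1, lintegral_union measurableSet_Ioc
      (Ioc_disjoint_Ioc_of_le le_rfl)]
    have hA1 : (∫⁻ u in Ioc (0:ℝ) (1 / s),
        ENNReal.ofReal (min 1 (u * s)) / ENNReal.ofReal u) ≤ 1 := by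
      have hb : ∀ᵐ u ∂(volume.restrict (Ioc (0:ℝ) (1 / s))),
          ENNReal.ofReal (min 1 (u * s)) / ENNReal.ofReal u ≤ ENNReal.ofReal s := by
        filter_upwards [ae_restrict_mem measurableSet_Ioc] with u hu
        have hu0 : (0:ℝ) < u := hu.1
        calc ENNReal.ofReal (min 1 (u * s)) / ENNReal.ofReal u
            ≤ ENNReal.ofReal (u * s) / ENNReal.ofReal u :=
              ENNReal.div_le_div_right (ENNReal.ofReal_le_ofReal (min_le_right _ _)) _
          _ = ENNReal.ofReal s := by
              rw [ENNReal.ofReal_mul hu0.le, mul_comm, mul_div_assoc,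
                ENNReal.div_self (ENNReal.ofReal_pos.mpr hu0).ne' ENNReal.ofReal_ne_top,
                mul_one]
      calc (∫⁻ u in Ioc (0:ℝ) (1 / s), ENNReal.ofReal (min 1 (u * s)) / ENNReal.ofReal u)
          ≤ ∫⁻ _ in Ioc (0:ℝ) (1 / s), ENNReal.ofReal s := lintegral_mono_ae hb
        _ = ENNReal.ofReal s * volume (Ioc (0:ℝ) (1 / s)) := setLIntegral_const _ _
        _ = 1 := by
            rw [Real.volume_Ioc, sub_zero, ← ENNReal.ofReal_mul hspos.le,
              mul_one_div_cancel hspos.ne', ENNReal.ofReal_one]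
    have hlog_int : IntegrableOn (fun u : ℝ => 1 / u) (Ioc (1 / s) 1) volume := by
      have hcont : ContinuousOn (fun u : ℝ => 1 / u) (Icc (1 / s) 1) := by
        refine ContinuousOn.div continuousOn_const continuousOn_id ?_
        intro x hx
        exact ne_of_gt (lt_of_lt_of_le h1s hx.1)
      exact hcont.integrableOn_Icc.mono_set Ioc_subset_Icc_self
    have hA2 : (∫⁻ u in Ioc (1 / s) 1,
        ENNReal.ofReal (min 1 (u * s)) / ENNReal.ofReal u) ≤ ENNReal.ofReal (Real.log s) := by
      have hb : ∀ᵐ u ∂(volume.restrict (Ioc (1 / s) 1)),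
          ENNReal.ofReal (min 1 (u * s)) / ENNReal.ofReal u ≤ ENNReal.ofReal (1 / u) := by
        filter_upwards [ae_restrict_mem measurableSet_Ioc] with u hu
        have hu0 : (0:ℝ) < u := h1s.trans hu.1
        rw [ENNReal.ofReal_div_of_pos hu0]
        exact ENNReal.div_le_div_right (ENNReal.ofReal_le_ofReal (min_le_left _ _)) _
      calc (∫⁻ u in Ioc (1 / s) 1, ENNReal.ofReal (min 1 (u * s)) / ENNReal.ofReal u)
          ≤ ∫⁻ u in Ioc (1 / s) 1, ENNReal.ofReal (1 / u) := lintegral_mono_ae hb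
        _ = ENNReal.ofReal (∫ u in Ioc (1 / s) 1, 1 / u) := by
            refine (ofReal_integral_eq_lintegral_ofReal hlog_int ?_).symm
            filter_upwards [ae_restrict_mem measurableSet_Ioc] with u hu
            have hu0 : (0:ℝ) < u := h1s.trans hu.1
            positivity
        _ = ENNReal.ofReal (Real.log s) := by
            rw [← intervalIntegral.integral_of_le h1s1]
            rw [integral_one_div ?_]
            · rw [one_div_one_div]
            · rw [Set.uIcc_of_le h1s1]
              intro hmem
              exact absurd hmem.1 (not_le.mpr h1s)
    exact add_le_add hA1 hA2
  have hT_fin : T < ⊤ := by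
    rw [hswap]
    calc (∫⁻ s in Ioi (1:ℝ),
          ∫⁻ u in Ioc (0:ℝ) 1, ENNReal.ofReal (min 1 (u * s)) / ENNReal.ofReal u ∂volume ∂μ)
        ≤ ∫⁻ s in Ioi (1:ℝ), (1 + ENNReal.ofReal (Real.log s)) ∂μ := by
          refine lintegral_mono_ae ?_
          filter_upwards [ae_restrict_mem measurableSet_Ioi] with s hs
          exact hinner s hs
      _ = (∫⁻ _ in Ioi (1:ℝ), (1:ENNReal) ∂μ) + ∫⁻ s in Ioi (1:ℝ), ENNReal.ofReal (Real.log s) ∂μ :=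
          lintegral_add_left measurable_const _
      _ < ⊤ := by
          rw [setLIntegral_one]
          exact ENNReal.add_lt_top.mpr ⟨hμ1, hlog⟩
  -- B = ∫_0^1 f u / ω u du (lintegral)
  set B : ENNReal := ∫⁻ u in Ioc (0:ℝ) 1, ENNReal.ofReal (f u / ω u) with hB_def
  have hB_fin : B < ⊤ := by
    have hpt : ∀ᵐ u ∂(volume.restrict (Ioc (0:ℝ) 1)),
        ENNReal.ofReal (f u / ω u)
          ≤ ENNReal.ofReal (A / c) + ENNReal.ofReal (1 / c) * (G u / ENNReal.ofReal u) := by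
      filter_upwards [ae_restrict_mem measurableSet_Ioc] with u hu
      have hu0 : (0:ℝ) < u := hu.1
      have h1 : f u / ω u ≤ f u / (c * u) :=
        div_le_div_of_nonneg_left (hf_nonneg u hu0.le) (by positivity) (hωge u hu0)
      have h2 : f u / (c * u) ≤ A / c + (1 / c) * (g u / u) := by
        have hfgu := hfg u hu
        have heq : (u * A + g u) / (c * u) = A / c + (1 / c) * (g u / u) := by
          field_simp
        calc f u / (c * u) ≤ (u * A + g u) / (c * u) := by
              apply div_le_div_of_nonneg_right hfgu
              positivity
          _ = A / c + (1 / c) * (g u / u) := heq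
      calc ENNReal.ofReal (f u / ω u)
          ≤ ENNReal.ofReal (A / c + (1 / c) * (g u / u)) :=
            ENNReal.ofReal_le_ofReal (h1.trans h2)
        _ ≤ ENNReal.ofReal (A / c) + ENNReal.ofReal ((1 / c) * (g u / u)) :=
            ENNReal.ofReal_add_le
        _ = ENNReal.ofReal (A / c) + ENNReal.ofReal (1 / c) * (G u / ENNReal.ofReal u) := by
            rw [ENNReal.ofReal_mul (by positivity : (0:ℝ) ≤ 1 / c),
              ENNReal.ofReal_div_of_pos hu0, hgG u hu0.le]
    calc B ≤ ∫⁻ u in Ioc (0:ℝ) 1,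
          (ENNReal.ofReal (A / c) + ENNReal.ofReal (1 / c) * (G u / ENNReal.ofReal u)) :=
          lintegral_mono_ae hpt
      _ = ENNReal.ofReal (A / c) * volume (Ioc (0:ℝ) 1) + ENNReal.ofReal (1 / c) * T := by
          rw [lintegral_add_left measurable_const, setLIntegral_const,
            lintegral_const_mul' _ _ ENNReal.ofReal_ne_top, hT_def]
      _ < ⊤ := by
          refine ENNReal.add_lt_top.mpr ⟨?_, ?_⟩
          · exact ENNReal.mul_lt_top ENNReal.ofReal_lt_top measure_Ioc_lt_top
          · exact ENNReal.mul_lt_top ENNReal.ofReal_lt_top hT_fin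
  -- the exponent is bounded by B.toReal
  have hEB : ∀ z ∈ Ioc (0:ℝ) 1, (∫ u in z..(1:ℝ), f u / ω u) ≤ B.toReal := by
    intro z hz
    rw [intervalIntegral.integral_of_le hz.2]
    have hmeas2 : AEStronglyMeasurable (fun u => f u / ω u) (volume.restrict (Ioc z 1)) :=
      (hF_meas.mono_measure (Measure.restrict_mono (Ioc_subset_Ioc_left hz.1.le)
        le_rfl)).aestronglyMeasurable
    have hnn : 0 ≤ᵐ[volume.restrict (Ioc z 1)] fun u => f u / ω u := by
      filter_upwards [ae_restrict_mem measurableSet_Ioc] with u hu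
      have hu0 : (0:ℝ) < u := hz.1.trans hu.1
      exact div_nonneg (hf_nonneg u hu0.le) (hωpos u hu0).le
    rw [integral_eq_lintegral_of_nonneg_ae hnn hmeas2]
    exact ENNReal.toReal_mono hB_fin.ne (lintegral_mono_set (Ioc_subset_Ioc_left hz.1.le))
  -- divergence of ∫_0^1 dz/z
  have hdiv : (∫⁻ z in Ioc (0:ℝ) 1, ENNReal.ofReal (1 / z)) = ⊤ := by
    by_contra h
    have hint : IntegrableOn (fun z : ℝ => 1 / z) (Ioc 0 1) volume := by
      refine ⟨(by fun_prop : Measurable fun z : ℝ => 1 / z).aestronglyMeasurable, ?_⟩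
      rw [hasFiniteIntegral_iff_ofReal ?_]
      · exact lt_top_iff_ne_top.mpr h
      · filter_upwards [ae_restrict_mem measurableSet_Ioc] with z hz
        have hz0 : (0:ℝ) < z := hz.1
        positivity
    have hint2 : IntegrableOn (fun z : ℝ => z ^ (-1:ℝ)) (Ioo (0:ℝ) 1) volume := by
      refine (hint.mono_set Ioo_subset_Ioc_self).congr_fun ?_ measurableSet_Ioo
      intro z hz
      simp [Real.rpow_neg_one]
    rw [intervalIntegral.integrableOn_Ioo_rpow_iff one_pos] at hint2
    linarith
  -- conclusion
  set r : ENNReal := ENNReal.ofReal (Real.exp (-B.toReal)) with hr_def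
  have hr0 : r ≠ 0 := (ENNReal.ofReal_pos.mpr (Real.exp_pos _)).ne'
  have hrt : r ≠ ⊤ := ENNReal.ofReal_ne_top
  have hmain : ∀ᵐ z ∂(volume.restrict (Ioc (0:ℝ) 1)),
      ENNReal.ofReal (1 / z) * r
        ≤ ENNReal.ofReal ((1 / z) * Real.exp (-(∫ u in z..(1:ℝ), f u / ω u))) := by
    filter_upwards [ae_restrict_mem measurableSet_Ioc] with z hz
    have hz0 : (0:ℝ) < z := hz.1
    rw [hr_def, ← ENNReal.ofReal_mul (by positivity : (0:ℝ) ≤ 1 / z)]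
    refine ENNReal.ofReal_le_ofReal ?_
    have h1 : Real.exp (-B.toReal) ≤ Real.exp (-(∫ u in z..(1:ℝ), f u / ω u)) :=
      Real.exp_le_exp.mpr (neg_le_neg (hEB z hz))
    exact mul_le_mul_of_nonneg_left h1 (by positivity)
  refine top_unique ?_
  calc (⊤:ENNReal) = (∫⁻ z in Ioc (0:ℝ) 1, ENNReal.ofReal (1 / z)) * r := by
        rw [hdiv, ENNReal.top_mul hr0]
    _ = ∫⁻ z in Ioc (0:ℝ) 1, ENNReal.ofReal (1 / z) * r := (lintegral_mul_const' r _ hrt).symm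
    _ ≤ _ := lintegral_mono_ae hmain
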